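/- Let (R_n, m) be an Artinian local ℂ-algebra with m^{n+1} = 0 and residue field ℂ, V_0 = R_n* its dual comodule. Every ℂ-linear endomorphism φ of V_0 commuting with the comultiplication V_0 → m* ⊗ V_0 (dual to multiplication m ⊗ R_n → R_n) and preserving the filtration of V_0 by annihilators of powers of m is given by the transpose of multiplication by a unique element r ∈ R_n; hence Hom_{MOS}(V_0, V_0) ≅ R_n as rings. -/

import Mathlib

section Aux

/-- If `M` is an Artinian `R`-module killed by the maximal ideal of a local `ℂ`-algebra `R`
with residue field `ℂ`, then `M` is a finite-dimensional `ℂ`-vector space. -/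
lemma auxFinite (R : Type) [CommRing R] [Algebra ℂ R] [IsLocalRing R]
    (hres : ∀ r : R, ∃ c : ℂ, r - algebraMap ℂ R c ∈ IsLocalRing.maximalIdeal R)
    (M : Type) [AddCommGroup M] [Module R M] [Module ℂ M] [IsScalarTower ℂ R M]
    [IsArtinian R M]
    (hkill : ∀ a ∈ IsLocalRing.maximalIdeal R, ∀ x : M, a • x = 0) :
    Module.Finite ℂ M := by
  classical
  -- every `ℂ`-submodule of `M` is automatically an `R`-submodule
  let g : Submodule ℂ M → Submodule R M := fun N =>
    { carrier := N
      add_mem' := fun ha hb => N.add_mem ha hb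
      zero_mem' := N.zero_mem
      smul_mem' := by
        intro r x hx
        obtain ⟨c, hc⟩ := hres r
        have h : r • x = (r - algebraMap ℂ R c) • x + (algebraMap ℂ R c) • x := by
          rw [← add_smul, sub_add_cancel]
        rw [h, hkill _ hc x, zero_add, algebraMap_smul]
        exact N.smul_mem c hx }
  have hart : IsArtinian ℂ M := by
    refine ⟨Subrelation.wf (r := InvImage (· < ·) g) ?_ (InvImage.wf g IsWellFounded.wf)⟩
    intro A B hAB
    obtain ⟨hle, x, hxB, hxA⟩ := SetLike.lt_iff_le_and_exists.mp hAB
    exact SetLike.lt_iff_le_and_exists.mpr ⟨fun y hy => hle hy, x, hxB, hxA⟩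
  let b := Module.Basis.ofVectorSpace ℂ M
  have hli : LinearIndependent ℂ ((↑) : (Module.Basis.ofVectorSpaceIndex ℂ M) → M) := by
    have := b.linearIndependent
    rwa [Module.Basis.coe_ofVectorSpace] at this
  have hfin : (Module.Basis.ofVectorSpaceIndex ℂ M).Finite :=
    IsArtinian.finite_of_linearIndependent hli
  haveI : Finite (Module.Basis.ofVectorSpaceIndex ℂ M) := hfin.to_subtype
  exact Module.Finite.of_basis b

end Aux

/-- Let `(Rₙ, m)` be an Artinian local `ℂ`-algebra with `m^{n+1} = 0` and
residue field `ℂ`, and let `V₀ = Rₙ* = Hom_ℂ(Rₙ, ℂ)` with the filtration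
`V₀ⁱ = {f : f(m^{i+1}) = 0}` (the annihilator of `m^{i+1}`).  Every `ℂ`-linear
endomorphism `φ` of `V₀` that preserves this filtration and commutes with the
comultiplication dual to `m ⊗ Rₙ → Rₙ` — equivalently, commutes with the transpose
`τ_a : f ↦ (x ↦ f(ax))` of multiplication by every `a ∈ m` — is the transpose of
multiplication by a unique `r ∈ Rₙ`; hence `Hom_MOS(V₀, V₀) ≅ Rₙ`. -/
theorem stmt15 (R : Type) [CommRing R] [Algebra ℂ R] [IsArtinianRing R] [IsLocalRing R]
    (n : ℕ) (hnil : (IsLocalRing.maximalIdeal R) ^ (n + 1) = ⊥)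
    (hres : ∀ r : R, ∃ c : ℂ, r - algebraMap ℂ R c ∈ IsLocalRing.maximalIdeal R)
    (φ : Module.Dual ℂ R →ₗ[ℂ] Module.Dual ℂ R)
    (hfilt : ∀ i : ℕ, ∀ f ∈ (((IsLocalRing.maximalIdeal R) ^ (i + 1) :
        Ideal R).restrictScalars ℂ).dualAnnihilator,
      φ f ∈ (((IsLocalRing.maximalIdeal R) ^ (i + 1) :
        Ideal R).restrictScalars ℂ).dualAnnihilator)
    (hcomm : ∀ a ∈ IsLocalRing.maximalIdeal R,
      φ ∘ₗ (LinearMap.mulLeft ℂ a).dualMap = (LinearMap.mulLeft ℂ a).dualMap ∘ₗ φ) :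
    ∃! r : R, φ = (LinearMap.mulLeft ℂ r).dualMap := by
  classical
  set m : Ideal R := IsLocalRing.maximalIdeal R with hm
  -- Step 1: R is finite-dimensional over ℂ.
  have step : ∀ i : ℕ, ((m ^ (i + 1)).restrictScalars ℂ).FG →
      ((m ^ i).restrictScalars ℂ).FG := by
    intro i hfg
    set J : Ideal R := m ^ (i + 1) with hJ
    set I : Ideal R := m ^ i with hI
    have hJI : J ≤ I := Ideal.pow_le_pow_right (Nat.le_succ i)
    have hmI : ∀ a ∈ m, ∀ x ∈ I, a * x ∈ J := by
      intro a ha x hx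
      rw [hJ, pow_succ']
      exact Ideal.mul_mem_mul ha hx
    set Q : Submodule R (R ⧸ J) := Submodule.map J.mkQ I with hQ
    haveI : Module.Finite ℂ Q := by
      apply auxFinite R hres
      intro a ha x
      obtain ⟨y, hyI, hy⟩ := Submodule.mem_map.mp x.2
      have hval : (a • x : Q).1 = a • (x.1 : R ⧸ J) := rfl
      have : a • (x.1 : R ⧸ J) = 0 := by
        rw [← hy, ← map_smul, smul_eq_mul]
        rw [Submodule.mkQ_apply, Submodule.Quotient.mk_eq_zero]
        exact hmI a ha y hyI
      exact Subtype.ext (by rw [hval, this]; rfl)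
    obtain ⟨T, hT⟩ := Module.Finite.fg_top (R := ℂ) (M := Q)
    have hchoice : ∀ t : Q, ∃ z : R, z ∈ I ∧ J.mkQ z = t.1 := by
      intro t
      obtain ⟨z, hz1, hz2⟩ := Submodule.mem_map.mp t.2
      exact ⟨z, hz1, hz2⟩
    choose z hz1 hz2 using hchoice
    set S : Finset R := T.image z with hSdef
    have key : I.restrictScalars ℂ = Submodule.span ℂ (S : Set R) ⊔ J.restrictScalars ℂ := by
      apply le_antisymm
      · intro x hx
        set qx : Q := ⟨J.mkQ x, Submodule.mem_map_of_mem hx⟩ with hqx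
        have h1 : qx ∈ Submodule.span ℂ (T : Set Q) := by rw [hT]; trivial
        have h2 : J.mkQ x ∈ Submodule.map (Q.subtype.restrictScalars ℂ)
            (Submodule.span ℂ (T : Set Q)) :=
          Submodule.mem_map_of_mem h1
        rw [Submodule.map_span] at h2
        have h3 : (Q.subtype.restrictScalars ℂ) '' (T : Set Q) ⊆
            ((J.mkQ.restrictScalars ℂ) '' (S : Set R)) := by
          rintro - ⟨t, ht, rfl⟩
          exact ⟨z t, Finset.mem_image_of_mem z ht, hz2 t⟩
        have h4 : J.mkQ x ∈ Submodule.span ℂ ((J.mkQ.restrictScalars ℂ) '' (S : Set R)) :=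
          Submodule.span_mono h3 h2
        rw [← Submodule.map_span] at h4
        obtain ⟨y, hy, hyx⟩ := Submodule.mem_map.mp h4
        have hxy : x - y ∈ J := by
          have : (Submodule.Quotient.mk y : R ⧸ J) = Submodule.Quotient.mk x := hyx
          rw [Submodule.Quotient.eq] at this
          rw [← neg_sub y x]
          exact J.neg_mem this
        have : x = y + (x - y) := by ring
        rw [this]
        exact Submodule.add_mem _ (Submodule.mem_sup_left hy) (Submodule.mem_sup_right hxy)
      · refine sup_le ?_ (fun x hx => hJI hx)
        rw [Submodule.span_le]
        intro s hs
        obtain ⟨t, ht, hts⟩ := Finset.mem_image.mp hs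
        exact hts ▸ hz1 t
    rw [key]
    exact Submodule.FG.sup (Submodule.fg_span S.finite_toSet) hfg
  have fgpow : ∀ k : ℕ, ((m ^ (n + 1 - k)).restrictScalars ℂ).FG := by
    intro k
    induction k with
    | zero =>
      simp only [Nat.sub_zero, hnil]
      exact ⟨∅, by simp⟩
    | succ k ih =>
      by_cases hk : k ≤ n
      · have h : n + 1 - k = (n + 1 - (k + 1)) + 1 := by omega
        exact step _ (h ▸ ih)
      · have h : n + 1 - (k + 1) = n + 1 - k := by omega
        rw [h]; exact ih
  have fgm : (m.restrictScalars ℂ).FG := by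
    have h := fgpow n
    have h1 : n + 1 - n = 1 := by omega
    rw [h1, pow_one] at h
    exact h
  have htop : (⊤ : Submodule ℂ R) = Submodule.span ℂ {(1 : R)} ⊔ m.restrictScalars ℂ := by
    apply le_antisymm
    · intro x _
      obtain ⟨c, hc⟩ := hres x
      have h : x = c • (1 : R) + (x - algebraMap ℂ R c) := by
        rw [Algebra.smul_def, mul_one, add_sub_cancel]
      rw [h]
      exact Submodule.add_mem _
        (Submodule.mem_sup_left (Submodule.smul_mem _ c (Submodule.mem_span_singleton_self 1)))
        (Submodule.mem_sup_right hc)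
    · exact le_top
  have : Module.Finite ℂ R := by
    rw [Module.finite_def, htop]
    exact Submodule.FG.sup (Submodule.fg_span_singleton 1) fgm
  have : FiniteDimensional ℂ R := this
  -- Step 2: define ψ via the double dual.
  set e : R ≃ₗ[ℂ] Module.Dual ℂ (Module.Dual ℂ R) := Module.evalEquiv ℂ R with he
  set ψ : R →ₗ[ℂ] R := (e.symm.toLinearMap ∘ₗ φ.dualMap ∘ₗ e.toLinearMap) with hψ
  have hψ_eval : ∀ (f : Module.Dual ℂ R) (x : R), f (ψ x) = φ f x := by
    intro f x
    show f (e.symm (φ.dualMap (e x))) = φ f x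
    rw [Module.apply_evalEquiv_symm_apply]
    rfl
  have sep : ∀ x y : R, (∀ f : Module.Dual ℂ R, f x = f y) → x = y := by
    intro x y h
    have h0 : ∀ f : Module.Dual ℂ R, f (x - y) = 0 := by
      intro f; rw [map_sub, h f, sub_self]
    exact sub_eq_zero.mp ((Module.forall_dual_apply_eq_zero_iff ℂ _).mp h0)
  -- ψ commutes with multiplication by every element of R.
  have hψ_mul : ∀ (r x : R), ψ (r * x) = r * ψ x := by
    have hmem : ∀ a ∈ m, ∀ x, ψ (a * x) = a * ψ x := by
      intro a ha x
      apply sep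
      intro f
      have h1 : f (ψ (a * x)) = φ f (a * x) := hψ_eval f (a * x)
      have h2 : f (a * ψ x) = ((LinearMap.mulLeft ℂ a).dualMap f) (ψ x) := rfl
      rw [h1, h2, hψ_eval]
      have h3 : φ ((LinearMap.mulLeft ℂ a).dualMap f) = (LinearMap.mulLeft ℂ a).dualMap (φ f) :=
        congrFun (congrArg (fun g => g.toFun) (hcomm a ha)) f
      rw [h3]
      rfl
    intro r x
    obtain ⟨c, hc⟩ := hres r
    have h : r * x = (r - algebraMap ℂ R c) * x + c • x := by
      rw [Algebra.smul_def, sub_mul, sub_add_cancel]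
    rw [h, map_add, map_smul, hmem _ hc x, Algebra.smul_def, sub_mul, sub_add_cancel]
  refine ⟨ψ 1, ?_, ?_⟩
  · ext f x
    show φ f x = f ((LinearMap.mulLeft ℂ (ψ 1)) x)
    have h : (LinearMap.mulLeft ℂ (ψ 1)) x = ψ 1 * x := rfl
    rw [← hψ_eval f x, h]
    congr 1
    calc ψ x = ψ (x * 1) := by rw [mul_one]
      _ = x * ψ 1 := hψ_mul x 1
      _ = ψ 1 * x := mul_comm _ _
  · intro r' hr'
    have hψr' : ∀ x, ψ x = r' * x := by
      intro x
      apply sep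
      intro f
      rw [hψ_eval f x, hr']
      rfl
    rw [hψr' 1, mul_one]
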